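/- Lemma 6 (trajectory-probability stability under softmax perturbation). Let (S, A, P, R, H) be an episodic MDP. Let π be a policy and let L_h : S×A → [−1/H, 1/H] for each h ∈ {1,…,H}, and define the perturbed policy π̂ by π̂_h(a|s) = π_h(a|s)·exp(L_h(s,a)) / Σ_{a'∈A} π_h(a'|s)·exp(L_h(s,a')). Then for every trajectory τ_H = (s_1,a_1,…,s_H,a_H) ∈ (S×A)^H one has ∏_{h=1}^H π̂_h(a_h|s_h) ≤ e² · ∏_{h=1}^H π_h(a_h|s_h), and consequently ℙ^{π̂}(τ_H) ≤ e² · ℙ^{π}(τ_H). -/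
import Mathlib


def IsPolicy {S A : Type} [Fintype A] (H : ℕ) (π : ℕ → S → A → ℝ) : Prop :=
  ∀ h < H, ∀ s, (∀ a, 0 ≤ π h s a) ∧ ∑ a, π h s a = 1

def IsKernel {S A : Type} [Fintype S] (H : ℕ) (P : ℕ → S → A → S → ℝ) : Prop :=
  ∀ h < H, ∀ s a, (∀ s', 0 ≤ P h s a s') ∧ ∑ s', P h s a s' = 1

/-- Probability of the trajectory `(st 0, ac 0, …, st (H-1), ac (H-1))` under policy `π`
(steps 0-based), for trajectories starting at the fixed initial state `s₁`. -/
noncomputable def trajProb {S A : Type} [Fintype S] [Fintype A] [DecidableEq S]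
    (P : ℕ → S → A → S → ℝ) (π : ℕ → S → A → ℝ) (s₁ : S) (H : ℕ)
    (st : ℕ → S) (ac : ℕ → A) : ℝ :=
  (if st 0 = s₁ then 1 else 0) *
    (∏ h ∈ Finset.range (H - 1), P h (st h) (ac h) (st (h+1))) *
    ∏ h ∈ Finset.range H, π h (st h) (ac h)

/-- **Lemma 6 (trajectory-probability stability under softmax perturbation).**
Steps are 0-based (`h ∈ {0,…,H-1}`). -/
theorem trajectory_probability_stability
    (S A : Type) [Fintype S] [Fintype A] [DecidableEq S] [Nonempty S] [Nonempty A]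
    (P : ℕ → S → A → S → ℝ) (R : ℕ → S → A → ℝ) (H : ℕ) (s₁ : S)
    (π πhat : ℕ → S → A → ℝ) (L : ℕ → S → A → ℝ)
    (hP : IsKernel H P) (hπ : IsPolicy H π)
    (hL : ∀ h < H, ∀ (s : S) (a : A), |L h s a| ≤ 1 / (H : ℝ))
    (hπhat : ∀ h s a, πhat h s a =
      π h s a * Real.exp (L h s a) / ∑ a', π h s a' * Real.exp (L h s a')) :
    ∀ (st : ℕ → S) (ac : ℕ → A),
      (∏ h ∈ Finset.range H, πhat h (st h) (ac h))
          ≤ Real.exp 2 * ∏ h ∈ Finset.range H, π h (st h) (ac h)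
        ∧
      trajProb P πhat s₁ H st ac ≤ Real.exp 2 * trajProb P π s₁ H st ac := by

  intro st ac
  have e2pos : (0:ℝ) < Real.exp 2 := Real.exp_pos 2
  -- key pointwise bound
  have key : ∀ h < H, ∀ (s : S) (a : A),
      πhat h s a ≤ Real.exp (2 / (H:ℝ)) * π h s a := by
    intro h hh s a
    have hπ' := hπ h hh s
    have hL' := hL h hh s
    set D := ∑ a', π h s a' * Real.exp (L h s a') with hD
    have hDge : Real.exp (-(1 / (H:ℝ))) ≤ D := by
      calc Real.exp (-(1 / (H:ℝ)))
          = ∑ a', π h s a' * Real.exp (-(1 / (H:ℝ))) := by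
            rw [← Finset.sum_mul, hπ'.2, one_mul]
        _ ≤ D := by
            apply Finset.sum_le_sum
            intro a' _
            apply mul_le_mul_of_nonneg_left _ (hπ'.1 a')
            exact Real.exp_le_exp.2 (neg_le_of_abs_le (hL' a'))
    have hDpos : 0 < D := lt_of_lt_of_le (Real.exp_pos _) hDge
    rw [hπhat, ← hD, div_le_iff₀ hDpos]
    calc π h s a * Real.exp (L h s a)
        ≤ π h s a * Real.exp (1 / (H:ℝ)) :=
          mul_le_mul_of_nonneg_left (Real.exp_le_exp.2 (le_of_abs_le (hL' a))) (hπ'.1 a)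
      _ = Real.exp (2 / (H:ℝ)) * π h s a * Real.exp (-(1 / (H:ℝ))) := by
          rw [mul_comm (Real.exp _) (π h s a), mul_assoc, ← Real.exp_add]
          ring_nf
      _ ≤ Real.exp (2 / (H:ℝ)) * π h s a * D := by
          apply mul_le_mul_of_nonneg_left hDge
          exact mul_nonneg (Real.exp_pos _).le (hπ'.1 a)
  have hhatnn : ∀ h < H, ∀ (s : S) (a : A), 0 ≤ πhat h s a := by
    intro h hh s a
    have := key h hh s a
    rw [hπhat]
    rcases eq_or_lt_of_le (Finset.sum_nonneg fun a' _ =>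
      mul_nonneg ((hπ h hh s).1 a') (Real.exp_pos _).le) with hz | hp
    · rw [← hz]; simp
    · exact div_nonneg (mul_nonneg ((hπ h hh s).1 a) (Real.exp_pos _).le) hp.le
  have main : (∏ h ∈ Finset.range H, πhat h (st h) (ac h))
      ≤ Real.exp 2 * ∏ h ∈ Finset.range H, π h (st h) (ac h) := by
    rcases Nat.eq_zero_or_pos H with hH | hH
    · simp [hH]
    · have : (∏ h ∈ Finset.range H, πhat h (st h) (ac h))
          ≤ ∏ h ∈ Finset.range H, Real.exp (2 / (H:ℝ)) * π h (st h) (ac h) := by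
        apply Finset.prod_le_prod
        · intro i hi
          exact hhatnn i (Finset.mem_range.1 hi) _ _
        · intro i hi
          exact key i (Finset.mem_range.1 hi) _ _
      refine this.trans ?_
      rw [Finset.prod_mul_distrib, Finset.prod_const, Finset.card_range,
        ← Real.exp_nat_mul]
      have hHne : (H:ℝ) ≠ 0 := Nat.cast_ne_zero.2 hH.ne'
      rw [mul_div_cancel₀ _ hHne]
  refine ⟨main, ?_⟩
  unfold trajProb
  have hnn : 0 ≤ (if st 0 = s₁ then (1:ℝ) else 0) *
      ∏ h ∈ Finset.range (H - 1), P h (st h) (ac h) (st (h+1)) := by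
    apply mul_nonneg
    · split <;> norm_num
    · apply Finset.prod_nonneg
      intro i hi
      exact (hP i (lt_of_lt_of_le (Finset.mem_range.1 hi) (Nat.sub_le H 1)) _ _).1 _
  calc (if st 0 = s₁ then (1:ℝ) else 0) *
        (∏ h ∈ Finset.range (H - 1), P h (st h) (ac h) (st (h+1))) *
        ∏ h ∈ Finset.range H, πhat h (st h) (ac h)
      ≤ (if st 0 = s₁ then (1:ℝ) else 0) *
        (∏ h ∈ Finset.range (H - 1), P h (st h) (ac h) (st (h+1))) *
        (Real.exp 2 * ∏ h ∈ Finset.range H, π h (st h) (ac h)) :=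
        mul_le_mul_of_nonneg_left main hnn
    _ = Real.exp 2 * ((if st 0 = s₁ then (1:ℝ) else 0) *
        (∏ h ∈ Finset.range (H - 1), P h (st h) (ac h) (st (h+1))) *
        ∏ h ∈ Finset.range H, π h (st h) (ac h)) := by ring
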